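/- arXiv:1701.07962 — 2 statements merged into one kernel-verified Lean document; each statement's English description precedes it below -/
import Mathlib

section
/- Let X be a Banach space, t₁,...,t_M distinct points of a compact metric space T, R₁,...,R_M ∈ L(X) with R = ∑ R_i such that Id_X − R is invertible, and μ⁰ ∈ cabv(X). Then the measure μ* = ∑_{i=1}^M δ_{t_i}(R_i ∘ (Id_X − R)^{-1})(μ⁰(T)) + μ⁰ satisfies μ*(T) = (Id_X − R)^{-1}(μ⁰(T)) and is a fixed point of H₂(μ) = ∑_{i=1}^M δ_{t_i} R_i(μ(T)) + μ⁰, i.e. H₂(μ*) = μ*. -/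
open MeasureTheory Filter Topology Set

noncomputable section

/-- A finite Borel partition of the whole space. -/
def IsBorelPartition {T : Type*} [MeasurableSpace T] (P : Finset (Set T)) : Prop :=
  (∀ A ∈ P, MeasurableSet A) ∧ ((P : Set (Set T)).PairwiseDisjoint id) ∧
    ⋃₀ (P : Set (Set T)) = Set.univ

/-- Total variation of a vector measure, as an extended real. -/
def evar {T X : Type*} [MeasurableSpace T] [NormedAddCommGroup X]
    (μ : VectorMeasure T X) : ENNReal :=
  ⨆ (P : Finset (Set T)) (_ : IsBorelPartition P), ∑ A ∈ P, (‖μ A‖₊ : ENNReal)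

/-- Bounded variation. -/
def BddVar {T X : Type*} [MeasurableSpace T] [NormedAddCommGroup X]
    (μ : VectorMeasure T X) : Prop := evar μ ≠ ⊤

/-- The variational norm. -/
def varNorm {T X : Type*} [MeasurableSpace T] [NormedAddCommGroup X]
    (μ : VectorMeasure T X) : ℝ := (evar μ).toReal

/-- Composition of a bounded operator with a vector measure. -/
def opComp {T X Y 𝕜 : Type*} [MeasurableSpace T] [NontriviallyNormedField 𝕜]
    [NormedAddCommGroup X] [NormedSpace 𝕜 X] [NormedAddCommGroup Y] [NormedSpace 𝕜 Y]
    (R : X →L[𝕜] Y) (μ : VectorMeasure T X) : VectorMeasure T Y :=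
  μ.mapRange R.toLinearMap.toAddMonoidHom R.continuous

/-- The Markov-type operator generated by operators `R i` and maps `ω i`. -/
def markovH {T X 𝕜 : Type*} [MeasurableSpace T] [NontriviallyNormedField 𝕜]
    [NormedAddCommGroup X] [NormedSpace 𝕜 X] {M : ℕ}
    (R : Fin M → X →L[𝕜] X) (ω : Fin M → T → T) (μ : VectorMeasure T X) :
    VectorMeasure T X :=
  ∑ i, opComp (R i) (μ.map (ω i))

/-- Simple (finitely-valued, measurable) function. -/
def IsSimpleFn {T X : Type*} [MeasurableSpace T] (g : T → X) : Prop :=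
  (Set.range g).Finite ∧ ∀ x : X, MeasurableSet (g ⁻¹' {x})

/-- Integral of a simple function against a vector measure. -/
def simpleIntegral (𝕜 : Type*) {T X : Type*} [RCLike 𝕜] [MeasurableSpace T]
    [NormedAddCommGroup X] [InnerProductSpace 𝕜 X] (μ : VectorMeasure T X) (g : T → X) : 𝕜 :=
  ∑ᶠ x : X, (inner 𝕜 x (μ (g ⁻¹' {x})) : 𝕜)

/-- `I` is the (uniform, sesquilinear) integral of `f` with respect to `μ`. -/
def HasUIntegral (𝕜 : Type*) {T X : Type*} [RCLike 𝕜] [MeasurableSpace T]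
    [NormedAddCommGroup X] [InnerProductSpace 𝕜 X] (μ : VectorMeasure T X)
    (f : T → X) (I : 𝕜) : Prop :=
  ∀ g : ℕ → T → X, (∀ n, IsSimpleFn (g n)) → TendstoUniformly g f atTop →
    Tendsto (fun n => simpleIntegral 𝕜 μ (g n)) atTop (nhds I)

/-- The uniform integral (defaulting to `0` when it does not exist). -/
def uIntegral (𝕜 : Type*) {T X : Type*} [RCLike 𝕜] [MeasurableSpace T]
    [NormedAddCommGroup X] [InnerProductSpace 𝕜 X] (μ : VectorMeasure T X) (f : T → X) : 𝕜 :=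
  letI := Classical.propDecidable
  if h : ∃ I, HasUIntegral 𝕜 μ f I then h.choose else 0

/-- The Monge–Kantorovich norm. -/
def mkNorm (𝕜 : Type*) {T X : Type*} [RCLike 𝕜] [PseudoMetricSpace T] [MeasurableSpace T]
    [NormedAddCommGroup X] [InnerProductSpace 𝕜 X] (μ : VectorMeasure T X) : ℝ :=
  sSup {s | ∃ (f : T → X) (L : NNReal), LipschitzWith L f ∧ (∀ t, ‖f t‖ + (L : ℝ) ≤ 1) ∧
    s = ‖uIntegral 𝕜 μ f‖}

/-- The modified Monge–Kantorovich norm. -/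
def mkNormStar (𝕜 : Type*) {T X : Type*} [RCLike 𝕜] [PseudoMetricSpace T] [MeasurableSpace T]
    [NormedAddCommGroup X] [InnerProductSpace 𝕜 X] (μ : VectorMeasure T X) : ℝ :=
  sSup {s | ∃ f : T → X, LipschitzWith 1 f ∧ s = ‖uIntegral 𝕜 μ f‖}

/-- The `X`-valued Dirac measure `B ↦ δ_t(B) • x`. -/
def diracVM {T : Type*} [MeasurableSpace T] {𝕜 X : Type*} [RCLike 𝕜]
    [NormedAddCommGroup X] [NormedSpace 𝕜 X] (t : T) (x : X) : VectorMeasure T X :=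
  ((Measure.dirac t).toSignedMeasure).mapRange
    { toFun := fun c : ℝ => (c : 𝕜) • x
      map_zero' := by simp
      map_add' := fun a b => by push_cast; rw [add_smul] }
    (RCLike.continuous_ofReal.smul continuous_const)

end


lemma vm_sum_apply {T X : Type*} [MeasurableSpace T] [AddCommGroup X] [TopologicalSpace X]
    [IsTopologicalAddGroup X] {ι : Type*} (s : Finset ι) (ν : ι → MeasureTheory.VectorMeasure T X)
    (A : Set T) : (∑ i ∈ s, ν i) A = ∑ i ∈ s, ν i A := by
  classical
  induction s using Finset.induction with
  | empty => simp
  | insert _ _ h ih => simp [Finset.sum_insert h, MeasureTheory.VectorMeasure.add_apply, ih]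

lemma diracVM_univ {T : Type*} [MeasurableSpace T] {𝕜 X : Type*} [RCLike 𝕜]
    [NormedAddCommGroup X] [NormedSpace 𝕜 X] (t : T) (x : X) :
    diracVM (𝕜 := 𝕜) t x Set.univ = x := by
  rw [diracVM, MeasureTheory.VectorMeasure.mapRange_apply,
    MeasureTheory.Measure.toSignedMeasure_apply_measurable MeasurableSet.univ]
  simp

/-- if `Id − R` is invertible (`R = ∑ R_i`), then
`μ* = ∑ δ_{t_i}(R_i ∘ (Id − R)⁻¹)(μ⁰(T)) + μ⁰` satisfies
`μ*(T) = (Id − R)⁻¹(μ⁰(T))` and is a fixed point of `H₂`. -/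
theorem constant_maps_explicit_fixed_point
    {T : Type*} [MetricSpace T] [CompactSpace T] [MeasurableSpace T] [BorelSpace T]
    {𝕜 X : Type*} [RCLike 𝕜] [NormedAddCommGroup X] [NormedSpace 𝕜 X] [CompleteSpace X]
    {M : ℕ} (t : Fin M → T) (ht : Function.Injective t)
    (R : Fin M → X →L[𝕜] X)
    (hinv : IsUnit ((1 : X →L[𝕜] X) - ∑ i, R i))
    (μ0 : VectorMeasure T X) (hμ0 : BddVar μ0) :
    ∀ μs : VectorMeasure T X,
      μs = ∑ i, diracVM (𝕜 := 𝕜) (t i)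
          ((R i) ((Ring.inverse ((1 : X →L[𝕜] X) - ∑ j, R j)) (μ0 Set.univ))) + μ0 →
      μs Set.univ = (Ring.inverse ((1 : X →L[𝕜] X) - ∑ j, R j)) (μ0 Set.univ) ∧
      ∑ i, diracVM (𝕜 := 𝕜) (t i) ((R i) (μs Set.univ)) + μ0 = μs := by
  intro μs hμs
  set S : X →L[𝕜] X := ∑ j, R j with hS
  set y : X := (Ring.inverse ((1 : X →L[𝕜] X) - S)) (μ0 Set.univ) with hy
  have key : ((1 : X →L[𝕜] X) - S) y = μ0 Set.univ := by
    have := Ring.mul_inverse_cancel _ hinv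
    calc ((1 : X →L[𝕜] X) - S) y
        = (((1 : X →L[𝕜] X) - S) * Ring.inverse ((1 : X →L[𝕜] X) - S)) (μ0 Set.univ) := rfl
      _ = μ0 Set.univ := by rw [this]; rfl
  have huniv : μs Set.univ = y := by
    rw [hμs, MeasureTheory.VectorMeasure.add_apply, vm_sum_apply]
    simp only [diracVM_univ]
    have : ∑ i, (R i) y = S y := by rw [hS]; simp
    rw [this]
    have := key
    simp only [ContinuousLinearMap.sub_apply, ContinuousLinearMap.one_apply] at this
    have : S y = y - μ0 Set.univ := by linear_combination (norm := abel) -this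
    rw [this]; abel
  refine ⟨huniv, ?_⟩
  rw [huniv, ← hμs.symm, hy]
end

section
/- (Countable change of variable.) With T compact metric, X Hilbert, (ω_i) Lipschitz self-maps with bounded Lipschitz constants and (R_i) ⊂ L(X) with ∑ ‖R_i‖ < ∞, for every continuous f : T → X and μ ∈ cabv(X): ∫ f d(H(μ)) = ∫ g dμ, where H(μ) = ∑_{i=1}^∞ R_i ∘ ω_i(μ) (convergent in variational norm) and g = ∑_{i=1}^∞ R_i* ∘ f ∘ ω_i (convergent uniformly on T). -/
open MeasureTheory Filter Topology Set

lemma CCV.isSimpleFn_comp {T : Type*} [MeasurableSpace T] {α β : Type*} {p : T → α}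
    (hp : (Set.range p).Finite) (hpm : ∀ a : α, MeasurableSet (p ⁻¹' {a})) (φ : α → β) :
    IsSimpleFn (fun t => φ (p t)) := by
  classical
  constructor
  · refine (hp.image φ).subset ?_
    rintro x ⟨t, rfl⟩; exact ⟨p t, ⟨t, rfl⟩, rfl⟩
  · intro x
    have fiber : (fun t => φ (p t)) ⁻¹' {x}
        = ⋃ a ∈ hp.toFinset.filter (fun a => φ a = x), p ⁻¹' {a} := by
      ext t
      simp only [Set.mem_preimage, Set.mem_singleton_iff, Set.mem_iUnion, Finset.mem_filter,
        exists_prop]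
      constructor
      · intro hx
        exact ⟨p t, ⟨by simp, hx⟩, rfl⟩
      · rintro ⟨a, ⟨_, ha⟩, rfl⟩
        exact ha
    rw [fiber]
    exact Finset.measurableSet_biUnion _ (fun a _ => hpm a)

section CCVAux

variable {T : Type*} [MeasurableSpace T] {𝕜 X : Type*} [RCLike 𝕜]
  [NormedAddCommGroup X] [InnerProductSpace 𝕜 X]

local notation "⟪" x ", " y "⟫" => @inner 𝕜 _ _ x y

lemma CCV.vm_sum_of_disjoint {α : Type*} (m : VectorMeasure T X) (s : Finset α) (B : α → Set T)
    (hm : ∀ a ∈ s, MeasurableSet (B a)) (hd : (s : Set α).PairwiseDisjoint B) :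
    m (⋃ a ∈ s, B a) = ∑ a ∈ s, m (B a) := by
  classical
  induction s using Finset.induction_on with
  | empty => simp
  | @insert a s ha ih =>
    rw [Finset.set_biUnion_insert]
    have hdisj : Disjoint (B a) (⋃ b ∈ s, B b) := by
      refine Set.disjoint_left.2 (fun t hta htb => ?_)
      obtain ⟨b, hb, htb'⟩ := Set.mem_iUnion₂.1 htb
      have hab : a ≠ b := fun h => ha (h ▸ hb)
      exact (Set.disjoint_left.1 (hd (Finset.mem_coe.2 (Finset.mem_insert_self a s))
        (Finset.mem_coe.2 (Finset.mem_insert_of_mem hb)) hab)) hta htb'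
    rw [MeasureTheory.VectorMeasure.of_union hdisj (hm a (Finset.mem_insert_self a s))
      (Finset.measurableSet_biUnion s (fun b hb => hm b (Finset.mem_insert_of_mem hb)))]
    rw [ih (fun b hb => hm b (Finset.mem_insert_of_mem hb))
      (hd.subset (by rw [Finset.coe_insert]; exact Set.subset_insert _ _))]
    rw [Finset.sum_insert ha]

lemma CCV.isSimpleFn_zero : IsSimpleFn (fun _ : T => (0 : X)) := by
  constructor
  · exact (Set.finite_singleton 0).subset (by rintro x ⟨t, rfl⟩; simp)
  · intro x
    rcases eq_or_ne (0 : X) x with h | h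
    · have : (fun _ : T => (0 : X)) ⁻¹' {x} = Set.univ := by
        ext t; simp [Set.mem_preimage, h]
      rw [this]; exact MeasurableSet.univ
    · have : (fun _ : T => (0 : X)) ⁻¹' {x} = ∅ := by
        ext t; simp [Set.mem_preimage, h]
      rw [this]; exact MeasurableSet.empty

lemma CCV.si_eq_sum (m : VectorMeasure T X) {h : T → X} (hh : IsSimpleFn h) :
    simpleIntegral 𝕜 m h = ∑ x ∈ hh.1.toFinset, ⟪x, m (h ⁻¹' {x})⟫ := by
  refine finsum_eq_sum_of_support_subset _ ?_
  intro x hx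
  rw [Set.Finite.coe_toFinset]
  by_contra hxr
  have hemp : h ⁻¹' {x} = ∅ := by
    ext t
    simp only [Set.mem_preimage, Set.mem_singleton_iff, Set.mem_empty_iff_false, iff_false]
    exact fun ht => hxr ⟨t, ht⟩
  rw [Function.mem_support] at hx
  exact hx (by rw [hemp, MeasureTheory.VectorMeasure.empty, inner_zero_right])

lemma CCV.si_comp (m : VectorMeasure T X) {α : Type*} {p : T → α} (hp : (Set.range p).Finite)
    (hpm : ∀ a : α, MeasurableSet (p ⁻¹' {a})) (φ : α → X) :
    IsSimpleFn (fun t => φ (p t)) ∧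
      simpleIntegral 𝕜 m (fun t => φ (p t)) = ∑ a ∈ hp.toFinset, ⟪φ a, m (p ⁻¹' {a})⟫ := by
  classical
  set s := hp.toFinset with hs
  have fiber : ∀ x : X, (fun t => φ (p t)) ⁻¹' {x}
      = ⋃ a ∈ s.filter (fun a => φ a = x), p ⁻¹' {a} := by
    intro x; ext t
    simp only [Set.mem_preimage, Set.mem_singleton_iff, Set.mem_iUnion, Finset.mem_filter,
      exists_prop]
    constructor
    · intro hx
      exact ⟨p t, ⟨by simp [hs], hx⟩, rfl⟩
    · rintro ⟨a, ⟨_, ha⟩, rfl⟩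
      exact ha
  have hsimp : IsSimpleFn (fun t => φ (p t)) := CCV.isSimpleFn_comp hp hpm φ
  have hmfib : ∀ x : X, m ((fun t => φ (p t)) ⁻¹' {x})
      = ∑ a ∈ s.filter (fun a => φ a = x), m (p ⁻¹' {a}) := by
    intro x
    rw [fiber x]
    apply CCV.vm_sum_of_disjoint m _ _ (fun a _ => hpm a)
    intro a _ b _ hab
    apply Set.disjoint_left.2
    intro t ht ht'
    exact hab ((Set.mem_singleton_iff.1 ht).symm.trans (Set.mem_singleton_iff.1 ht'))
  refine ⟨hsimp, ?_⟩
  rw [CCV.si_eq_sum m hsimp]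
  have step : ∀ x ∈ hsimp.1.toFinset,
      ⟪x, m ((fun t => φ (p t)) ⁻¹' {x})⟫
        = ∑ a ∈ s.filter (fun a => φ a = x), ⟪φ a, m (p ⁻¹' {a})⟫ := by
    intro x _
    rw [hmfib x, inner_sum]
    refine Finset.sum_congr rfl (fun a ha => ?_)
    rw [(Finset.mem_filter.1 ha).2]
  rw [Finset.sum_congr rfl step]
  apply Finset.sum_fiberwise_of_maps_to
  intro a ha
  rw [Set.Finite.mem_toFinset]
  obtain ⟨t, ht⟩ := (by simpa [hs] using ha : a ∈ Set.range p)
  exact ⟨t, by simp [ht]⟩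

end CCVAux
set_option linter.unusedSectionVars false

section CCVAux2

variable {T : Type*} [MeasurableSpace T] {𝕜 X : Type*} [RCLike 𝕜]
  [NormedAddCommGroup X] [InnerProductSpace 𝕜 X]

local notation "⟪" x ", " y "⟫" => @inner 𝕜 _ _ x y

lemma CCV.varNorm_nonneg (m : VectorMeasure T X) : 0 ≤ varNorm m := ENNReal.toReal_nonneg

lemma CCV.partition_sum_le (m : VectorMeasure T X) (hm : BddVar m) (P : Finset (Set T))
    (hP : IsBorelPartition P) : ∑ A ∈ P, ‖m A‖ ≤ varNorm m := by
  have h1 : (∑ A ∈ P, (‖m A‖₊ : ENNReal)) ≤ evar m :=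
    le_iSup₂ (f := fun (P : Finset (Set T)) (_ : IsBorelPartition P) =>
      ∑ A ∈ P, (‖m A‖₊ : ENNReal)) P hP
  have h2 := ENNReal.toReal_mono hm h1
  have h3 : (∑ A ∈ P, (‖m A‖₊ : ENNReal)).toReal = ∑ A ∈ P, ‖m A‖ := by
    rw [← ENNReal.coe_finset_sum, ENNReal.coe_toReal, NNReal.coe_sum]
    simp [coe_nnnorm]
  rwa [h3] at h2

lemma CCV.partition_le (m : VectorMeasure T X) (hm : BddVar m) {α : Type*} (s : Finset α)
    (B : α → Set T) (hms : ∀ a ∈ s, MeasurableSet (B a))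
    (hd : (s : Set α).PairwiseDisjoint B) :
    ∑ a ∈ s, ‖m (B a)‖ ≤ varNorm m := by
  classical
  set s' := s.filter (fun a => B a ≠ ∅) with hs'
  have hsum : ∑ a ∈ s, ‖m (B a)‖ = ∑ a ∈ s', ‖m (B a)‖ := by
    symm
    apply Finset.sum_subset (Finset.filter_subset _ _)
    intro a ha hns'
    have hBa : B a = ∅ := by
      by_contra hne; exact hns' (Finset.mem_filter.2 ⟨ha, hne⟩)
    rw [hBa, MeasureTheory.VectorMeasure.empty, norm_zero]
  have hinj : Set.InjOn B ↑s' := by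
    intro a ha b hb hab
    by_contra hne
    have h1 := hd (Finset.mem_coe.2 (Finset.filter_subset _ _ (Finset.mem_coe.1 ha)))
      (Finset.mem_coe.2 (Finset.filter_subset _ _ (Finset.mem_coe.1 hb))) hne
    have h2 : B a = ∅ := by
      have hself : Disjoint (B a) (B a) := by
        have := h1; rw [Function.onFun, ← hab] at this; exact this
      simpa using disjoint_self.1 hself
    exact (Finset.mem_filter.1 (Finset.mem_coe.1 ha)).2 h2
  set P0 := s'.image B with hP0
  have himg : ∑ A ∈ P0, ‖m A‖ = ∑ a ∈ s', ‖m (B a)‖ :=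
    Finset.sum_image (fun a ha b hb h => hinj (Finset.mem_coe.2 ha) (Finset.mem_coe.2 hb) h)
  set U := ⋃ a ∈ s', B a with hU
  have hUmeas : MeasurableSet U :=
    Finset.measurableSet_biUnion s' (fun a ha => hms a (Finset.filter_subset _ _ ha))
  have hP0meas : ∀ A ∈ P0, MeasurableSet A := by
    intro A hA
    obtain ⟨a, ha, rfl⟩ := Finset.mem_image.1 hA
    exact hms a (Finset.filter_subset _ _ ha)
  have hP0disj : (↑P0 : Set (Set T)).PairwiseDisjoint id := by
    intro A hA B' hB' hne
    obtain ⟨a, ha, rfl⟩ := Finset.mem_image.1 (Finset.mem_coe.1 hA)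
    obtain ⟨b, hb, rfl⟩ := Finset.mem_image.1 (Finset.mem_coe.1 hB')
    have hab : a ≠ b := fun h => hne (by rw [h])
    exact hd (Finset.mem_coe.2 (Finset.filter_subset _ _ ha))
      (Finset.mem_coe.2 (Finset.filter_subset _ _ hb)) hab
  have hpart : IsBorelPartition (insert Uᶜ P0) := by
    refine ⟨?_, ?_, ?_⟩
    · intro A hA
      rcases Finset.mem_insert.1 hA with rfl | hA
      · exact hUmeas.compl
      · exact hP0meas A hA
    · rw [Finset.coe_insert]
      refine Set.PairwiseDisjoint.insert hP0disj ?_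
      intro A hA _
      obtain ⟨a, ha, rfl⟩ := Finset.mem_image.1 (Finset.mem_coe.1 hA)
      refine Set.disjoint_left.2 (fun t htU htB => ?_)
      exact htU (Set.mem_biUnion (Finset.mem_coe.2 ha) htB)
    · rw [Finset.coe_insert, Set.sUnion_insert]
      have : ⋃₀ (↑P0 : Set (Set T)) = U := by
        rw [hP0, Finset.coe_image, Set.sUnion_image]
        rfl
      rw [this, Set.compl_union_self]
  calc ∑ a ∈ s, ‖m (B a)‖ = ∑ A ∈ P0, ‖m A‖ := by rw [hsum, himg]
    _ ≤ ∑ A ∈ insert Uᶜ P0, ‖m A‖ :=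
        Finset.sum_le_sum_of_subset_of_nonneg (Finset.subset_insert _ _)
          (fun _ _ _ => norm_nonneg _)
    _ ≤ varNorm m := CCV.partition_sum_le m hm _ hpart

lemma CCV.norm_meas_le (m : VectorMeasure T X) (hm : BddVar m) {B : Set T}
    (hB : MeasurableSet B) : ‖m B‖ ≤ varNorm m := by
  have := CCV.partition_le m hm ({B} : Finset (Set T)) id
    (fun A hA => by rwa [Finset.mem_singleton.1 hA]) (by rw [Finset.coe_singleton]; exact Set.pairwiseDisjoint_singleton _ _)
  simpa using this

lemma CCV.si_zero (m : VectorMeasure T X) : simpleIntegral 𝕜 m (fun _ : T => (0 : X)) = 0 := by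
  apply finsum_eq_zero_of_forall_eq_zero
  intro x
  rcases eq_or_ne x 0 with rfl | hx
  · rw [inner_zero_left]
  · have : (fun _ : T => (0 : X)) ⁻¹' {x} = ∅ := by
      ext t; simp [Ne.symm hx]
    rw [this, MeasureTheory.VectorMeasure.empty, inner_zero_right]

lemma CCV.pair_finite {g1 g2 : T → X} (h1 : IsSimpleFn g1) (h2 : IsSimpleFn g2) :
    (Set.range (fun t => (g1 t, g2 t))).Finite :=
  (h1.1.prod h2.1).subset (by rintro x ⟨t, rfl⟩; exact ⟨⟨t, rfl⟩, ⟨t, rfl⟩⟩)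

lemma CCV.pair_fiber {g1 g2 : T → X} (h1 : IsSimpleFn g1) (h2 : IsSimpleFn g2) :
    ∀ a : X × X, MeasurableSet ((fun t => (g1 t, g2 t)) ⁻¹' {a}) := by
  intro a
  have : (fun t => (g1 t, g2 t)) ⁻¹' {a} = g1 ⁻¹' {a.1} ∩ g2 ⁻¹' {a.2} := by
    ext t; simp [Prod.ext_iff]
  rw [this]
  exact (h1.2 a.1).inter (h2.2 a.2)

lemma CCV.si_sub_le (m : VectorMeasure T X) (hm : BddVar m) {h1 h2 : T → X}
    (hs1 : IsSimpleFn h1) (hs2 : IsSimpleFn h2) {C : ℝ} (hC0 : 0 ≤ C)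
    (hC : ∀ t, ‖h1 t - h2 t‖ ≤ C) :
    ‖simpleIntegral 𝕜 m h1 - simpleIntegral 𝕜 m h2‖ ≤ C * varNorm m := by
  classical
  set p : T → X × X := fun t => (h1 t, h2 t) with hpdef
  have hp : (Set.range p).Finite := CCV.pair_finite hs1 hs2
  have hpm : ∀ a : X × X, MeasurableSet (p ⁻¹' {a}) := CCV.pair_fiber hs1 hs2
  have e1 : simpleIntegral 𝕜 m h1 = ∑ a ∈ hp.toFinset, ⟪a.1, m (p ⁻¹' {a})⟫ :=
    (CCV.si_comp m hp hpm (fun a => a.1)).2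
  have e2 : simpleIntegral 𝕜 m h2 = ∑ a ∈ hp.toFinset, ⟪a.2, m (p ⁻¹' {a})⟫ :=
    (CCV.si_comp m hp hpm (fun a => a.2)).2
  rw [e1, e2, ← Finset.sum_sub_distrib]
  have e3 : ∀ a ∈ hp.toFinset, ⟪a.1, m (p ⁻¹' {a})⟫ - ⟪a.2, m (p ⁻¹' {a})⟫
      = ⟪a.1 - a.2, m (p ⁻¹' {a})⟫ := fun a _ => (inner_sub_left _ _ _).symm
  rw [Finset.sum_congr rfl e3]
  calc ‖∑ a ∈ hp.toFinset, ⟪a.1 - a.2, m (p ⁻¹' {a})⟫‖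
      ≤ ∑ a ∈ hp.toFinset, ‖⟪a.1 - a.2, m (p ⁻¹' {a})⟫‖ := norm_sum_le _ _
    _ ≤ ∑ a ∈ hp.toFinset, C * ‖m (p ⁻¹' {a})‖ := by
        apply Finset.sum_le_sum
        intro a ha
        have haa : a ∈ Set.range p := by rwa [← Set.Finite.mem_toFinset hp]
        obtain ⟨t, rfl⟩ := haa
        refine (norm_inner_le_norm _ _).trans ?_
        exact mul_le_mul_of_nonneg_right (hC t) (norm_nonneg _)
    _ = C * ∑ a ∈ hp.toFinset, ‖m (p ⁻¹' {a})‖ := by rw [Finset.mul_sum]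
    _ ≤ C * varNorm m := by
        apply mul_le_mul_of_nonneg_left _ hC0
        apply CCV.partition_le m hm _ _ (fun a _ => hpm a)
        intro a _ b _ hab
        refine Set.disjoint_left.2 (fun t ht ht' => ?_)
        exact hab ((Set.mem_singleton_iff.1 ht).symm.trans (Set.mem_singleton_iff.1 ht'))

lemma CCV.si_norm_le (m : VectorMeasure T X) (hm : BddVar m) {h : T → X}
    (hs : IsSimpleFn h) {C : ℝ} (hC0 : 0 ≤ C) (hC : ∀ t, ‖h t‖ ≤ C) :
    ‖simpleIntegral 𝕜 m h‖ ≤ C * varNorm m := by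
  have := CCV.si_sub_le (𝕜 := 𝕜) m hm hs CCV.isSimpleFn_zero hC0 (by simpa using hC)
  simpa [CCV.si_zero] using this

lemma CCV.isSimpleFn_map {h : T → X} (hh : IsSimpleFn h) (A : X → X) :
    IsSimpleFn (fun t => A (h t)) :=
  CCV.isSimpleFn_comp hh.1 hh.2 A

lemma CCV.isSimpleFn_comp_pre {h : T → X} (hh : IsSimpleFn h) {ω : T → T}
    (hω : Measurable ω) : IsSimpleFn (fun t => h (ω t)) := by
  constructor
  · exact hh.1.subset (by rintro x ⟨t, rfl⟩; exact ⟨ω t, rfl⟩)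
  · intro x
    exact hω (hh.2 x)

lemma CCV.isSimpleFn_add {g1 g2 : T → X} (h1 : IsSimpleFn g1) (h2 : IsSimpleFn g2) :
    IsSimpleFn (fun t => g1 t + g2 t) :=
  CCV.isSimpleFn_comp (CCV.pair_finite h1 h2) (CCV.pair_fiber h1 h2) (fun a => a.1 + a.2)

lemma CCV.si_add (m : VectorMeasure T X) {g1 g2 : T → X} (h1 : IsSimpleFn g1)
    (h2 : IsSimpleFn g2) :
    simpleIntegral 𝕜 m (fun t => g1 t + g2 t)
      = simpleIntegral 𝕜 m g1 + simpleIntegral 𝕜 m g2 := by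
  have hp := CCV.pair_finite h1 h2
  have hpm := CCV.pair_fiber h1 h2
  have e0 : simpleIntegral 𝕜 m (fun t => g1 t + g2 t)
      = ∑ a ∈ hp.toFinset, ⟪a.1 + a.2, m ((fun t => (g1 t, g2 t)) ⁻¹' {a})⟫ :=
    (CCV.si_comp m hp hpm (fun a => a.1 + a.2)).2
  have e1 : simpleIntegral 𝕜 m g1
      = ∑ a ∈ hp.toFinset, ⟪a.1, m ((fun t => (g1 t, g2 t)) ⁻¹' {a})⟫ :=
    (CCV.si_comp m hp hpm (fun a => a.1)).2
  have e2 : simpleIntegral 𝕜 m g2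
      = ∑ a ∈ hp.toFinset, ⟪a.2, m ((fun t => (g1 t, g2 t)) ⁻¹' {a})⟫ :=
    (CCV.si_comp m hp hpm (fun a => a.2)).2
  rw [e0, e1, e2, ← Finset.sum_add_distrib]
  exact Finset.sum_congr rfl (fun a _ => inner_add_left _ _ _)

lemma CCV.isSimpleFn_sum {ι : Type*} (s : Finset ι) (F : ι → T → X)
    (hF : ∀ i ∈ s, IsSimpleFn (F i)) : IsSimpleFn (fun t => ∑ i ∈ s, F i t) := by
  classical
  induction s using Finset.induction_on with
  | empty => simpa using CCV.isSimpleFn_zero (X := X) (T := T)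
  | @insert a s ha ih =>
    simp only [Finset.sum_insert ha]
    exact CCV.isSimpleFn_add (hF a (Finset.mem_insert_self a s))
      (ih (fun i hi => hF i (Finset.mem_insert_of_mem hi)))

lemma CCV.si_sum (m : VectorMeasure T X) {ι : Type*} (s : Finset ι) (F : ι → T → X)
    (hF : ∀ i ∈ s, IsSimpleFn (F i)) :
    simpleIntegral 𝕜 m (fun t => ∑ i ∈ s, F i t) = ∑ i ∈ s, simpleIntegral 𝕜 m (F i) := by
  classical
  induction s using Finset.induction_on with
  | empty => simpa using CCV.si_zero m
  | @insert a s ha ih =>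
    simp only [Finset.sum_insert ha]
    rw [CCV.si_add m (hF a (Finset.mem_insert_self a s))
      (CCV.isSimpleFn_sum s F (fun i hi => hF i (Finset.mem_insert_of_mem hi)))]
    rw [ih (fun i hi => hF i (Finset.mem_insert_of_mem hi))]

lemma CCV.hasUIntegral_of_approx (m : VectorMeasure T X) (hm : BddVar m) (f : T → X)
    (h : ℕ → T → X) (b : ℕ → ℝ) (hsimp : ∀ n, IsSimpleFn (h n))
    (hb : ∀ n t, ‖h n t - f t‖ ≤ b n) (hb0 : Tendsto b atTop (nhds 0)) {I : 𝕜}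
    (hI : Tendsto (fun n => simpleIntegral 𝕜 m (h n)) atTop (nhds I)) :
    HasUIntegral 𝕜 m f I := by
  intro g hg hgu
  have key : Tendsto (fun n => simpleIntegral 𝕜 m (g n) - simpleIntegral 𝕜 m (h n))
      atTop (nhds 0) := by
    rw [NormedAddCommGroup.tendsto_nhds_zero]
    intro ε hε
    have hV1 : (0:ℝ) < varNorm m + 1 := by
      have := CCV.varNorm_nonneg m; linarith
    set δ := ε / (4 * (varNorm m + 1)) with hδ
    have hδpos : 0 < δ := by positivity
    have h1 : ∀ᶠ n in atTop, ∀ t, dist (f t) (g n t) < δ :=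
      (Metric.tendstoUniformly_iff.1 hgu) δ hδpos
    have h2 : ∀ᶠ n in atTop, b n < δ := (tendsto_order.1 hb0).2 δ hδpos
    filter_upwards [h1, h2] with n hn1 hn2
    have hC : ∀ t, ‖g n t - h n t‖ ≤ 2 * δ := by
      intro t
      have e1 : ‖g n t - f t‖ < δ := by
        rw [← dist_eq_norm, dist_comm]; exact hn1 t
      have e2 : ‖f t - h n t‖ ≤ δ := by
        rw [norm_sub_rev]; exact (hb n t).trans hn2.le
      calc ‖g n t - h n t‖ = ‖(g n t - f t) + (f t - h n t)‖ := by
            rw [sub_add_sub_cancel]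
        _ ≤ ‖g n t - f t‖ + ‖f t - h n t‖ := norm_add_le _ _
        _ ≤ δ + δ := add_le_add e1.le e2
        _ = 2 * δ := by ring
    have hest := CCV.si_sub_le (𝕜 := 𝕜) m hm (hg n) (hsimp n) (by positivity) hC
    calc ‖simpleIntegral 𝕜 m (g n) - simpleIntegral 𝕜 m (h n)‖
        ≤ 2 * δ * varNorm m := hest
      _ ≤ 2 * δ * (varNorm m + 1) := by nlinarith [CCV.varNorm_nonneg m]
      _ = ε / 2 := by rw [hδ]; field_simp; ring
      _ < ε := by linarith
  have hsum := key.add hI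
  rw [zero_add] at hsum
  exact hsum.congr (fun n => by ring)

end CCVAux2
section CCVAux3

set_option linter.unusedSectionVars false

private noncomputable def CCVpick {β : Type*} [PseudoMetricSpace β] (ε : ℝ) : List β → β → β
  | [] => fun x => x
  | a :: l => fun x => if dist x a < ε then a else CCVpick ε l x

private lemma CCVpick_measurable {β : Type*} [PseudoMetricSpace β] [MeasurableSpace β]
    [OpensMeasurableSpace β] (ε : ℝ) (l : List β) : Measurable (CCVpick ε l) := by
  induction l with
  | nil => exact measurable_id
  | cons a l ih =>
    simp only [CCVpick]
    exact Measurable.ite (show MeasurableSet {x | dist x a < ε} from measurableSet_ball)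
      measurable_const ih

private lemma CCVpick_spec {β : Type*} [PseudoMetricSpace β] {ε : ℝ} (l : List β) (x : β)
    (hx : ∃ a ∈ l, dist x a < ε) :
    CCVpick ε l x ∈ l ∧ dist x (CCVpick ε l x) < ε := by
  induction l with
  | nil => simp at hx
  | cons a l ih =>
    by_cases hxa : dist x a < ε
    · constructor
      · simp only [CCVpick]
        rw [if_pos hxa]; exact List.mem_cons_self
      · simp only [CCVpick]
        rw [if_pos hxa]; exact hxa
    · obtain ⟨b, hb, hbd⟩ := hx
      have hbl : b ∈ l := by
        rcases List.mem_cons.1 hb with rfl | hm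
        · exact absurd hbd hxa
        · exact hm
      obtain ⟨h1, h2⟩ := ih ⟨b, hbl, hbd⟩
      constructor
      · simp only [CCVpick]
        rw [if_neg hxa]; exact List.mem_cons_of_mem a h1
      · simp only [CCVpick]
        rw [if_neg hxa]; exact h2

lemma CCV.exists_simple_approx {T : Type*} [MetricSpace T] [CompactSpace T] [MeasurableSpace T]
    [BorelSpace T] {X : Type*} [NormedAddCommGroup X]
    {f : T → X} (hf : Continuous f) {ε : ℝ} (hε : 0 < ε) :
    ∃ g : T → X, IsSimpleFn g ∧ ∀ t, ‖g t - f t‖ ≤ ε := by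
  classical
  letI : MeasurableSpace X := borel X
  haveI : BorelSpace X := ⟨rfl⟩
  obtain ⟨t0, ht0fin, ht0cov⟩ :=
    Metric.totallyBounded_iff.1 (isCompact_range hf).totallyBounded ε hε
  set l := ht0fin.toFinset.toList with hl
  have hcov : ∀ y ∈ Set.range f, ∃ a ∈ l, dist y a < ε := by
    intro y hy
    have := ht0cov hy
    simp only [Set.mem_iUnion, Metric.mem_ball, exists_prop] at this
    obtain ⟨z, hz, hdz⟩ := this
    exact ⟨z, by simp [hl, Set.Finite.mem_toFinset, hz], hdz⟩
  refine ⟨fun t => CCVpick ε l (f t), ⟨?_, ?_⟩, ?_⟩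
  · apply Set.Finite.subset l.toFinset.finite_toSet
    rintro x ⟨t, rfl⟩
    have := (CCVpick_spec l (f t) (hcov _ ⟨t, rfl⟩)).1
    simpa using this
  · intro x
    exact ((CCVpick_measurable ε l).comp hf.measurable)
      (isClosed_singleton.measurableSet)
  · intro t
    have := (CCVpick_spec l (f t) (hcov _ ⟨t, rfl⟩)).2
    rw [dist_comm, dist_eq_norm] at this
    exact this.le

end CCVAux3
section CCVAux4

set_option linter.unusedSectionVars false

open ContinuousLinearMap

variable {T : Type*} [MeasurableSpace T] {𝕜 X : Type*} [RCLike 𝕜]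
  [NormedAddCommGroup X] [InnerProductSpace 𝕜 X] [CompleteSpace X]

local notation "⟪" x ", " y "⟫" => @inner 𝕜 _ _ x y

lemma CCV.core_hasSum (ω : ℕ → T → T) (hωm : ∀ i, Measurable (ω i))
    (R : ℕ → X →L[𝕜] X) (μ ν : VectorMeasure T X)
    (hν : ∀ B : Set T, MeasurableSet B → HasSum (fun i => (R i) (μ (ω i ⁻¹' B))) (ν B))
    {h : T → X} (hh : IsSimpleFn h) :
    HasSum (fun i => simpleIntegral 𝕜 μ (fun t => (ContinuousLinearMap.adjoint (R i)) (h (ω i t))))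
      (simpleIntegral 𝕜 ν h) := by
  classical
  set s := hh.1.toFinset with hs
  have hfib : ∀ x : X, MeasurableSet (h ⁻¹' {x}) := hh.2
  have key : ∀ x : X,
      HasSum (fun i => ⟪(ContinuousLinearMap.adjoint (R i)) x, μ (ω i ⁻¹' (h ⁻¹' {x}))⟫)
        ⟪x, ν (h ⁻¹' {x})⟫ := by
    intro x
    have h1 := (innerSL 𝕜 x).hasSum (hν _ (hfib x))
    have h2 : HasSum (fun i => ⟪x, (R i) (μ (ω i ⁻¹' (h ⁻¹' {x})))⟫) ⟪x, ν (h ⁻¹' {x})⟫ := h1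
    simpa only [ContinuousLinearMap.adjoint_inner_left] using h2
  have hsum2 : HasSum
      (fun i => ∑ x ∈ s, ⟪(ContinuousLinearMap.adjoint (R i)) x, μ (ω i ⁻¹' (h ⁻¹' {x}))⟫)
      (∑ x ∈ s, ⟪x, ν (h ⁻¹' {x})⟫) := hasSum_sum (fun x _ => key x)
  have hterm : ∀ i : ℕ,
      simpleIntegral 𝕜 μ (fun t => (ContinuousLinearMap.adjoint (R i)) (h (ω i t)))
        = ∑ x ∈ s, ⟪(ContinuousLinearMap.adjoint (R i)) x, μ (ω i ⁻¹' (h ⁻¹' {x}))⟫ := by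
    intro i
    have hp : (Set.range (fun t => h (ω i t))).Finite :=
      hh.1.subset (by rintro x ⟨t, rfl⟩; exact ⟨ω i t, rfl⟩)
    have hpm : ∀ a : X, MeasurableSet ((fun t => h (ω i t)) ⁻¹' {a}) :=
      fun a => (hωm i) (hfib a)
    have e : simpleIntegral 𝕜 μ (fun t => (ContinuousLinearMap.adjoint (R i)) (h (ω i t)))
        = ∑ a ∈ hp.toFinset,
            ⟪(ContinuousLinearMap.adjoint (R i)) a, μ ((fun t => h (ω i t)) ⁻¹' {a})⟫ :=
      (CCV.si_comp μ hp hpm (fun a => (ContinuousLinearMap.adjoint (R i)) a)).2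
    rw [e]
    have hpre : ∀ a : X, (fun t => h (ω i t)) ⁻¹' {a} = ω i ⁻¹' (h ⁻¹' {a}) := fun a => rfl
    simp only [hpre]
    apply Finset.sum_subset
    · intro a ha
      rw [Set.Finite.mem_toFinset] at ha
      rw [hs, Set.Finite.mem_toFinset]
      obtain ⟨t, rfl⟩ := ha
      exact ⟨ω i t, rfl⟩
    · intro x _ hx
      have hemp : ω i ⁻¹' (h ⁻¹' {x}) = ∅ := by
        ext t
        simp only [Set.mem_preimage, Set.mem_singleton_iff, Set.mem_empty_iff_false, iff_false]
        intro ht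
        exact (by rwa [Set.Finite.mem_toFinset] at hx : x ∉ Set.range (fun t => h (ω i t)))
          ⟨t, ht⟩
      rw [hemp, MeasureTheory.VectorMeasure.empty, inner_zero_right]
  rw [CCV.si_eq_sum ν hh]
  have hfun : (fun i =>
      simpleIntegral 𝕜 μ (fun t => (ContinuousLinearMap.adjoint (R i)) (h (ω i t))))
      = fun i => ∑ x ∈ s, ⟪(ContinuousLinearMap.adjoint (R i)) x, μ (ω i ⁻¹' (h ⁻¹' {x}))⟫ :=
    funext hterm
  rw [hfun]
  exact hsum2

lemma CCV.bddVar_target (ω : ℕ → T → T) (hωm : ∀ i, Measurable (ω i))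
    (R : ℕ → X →L[𝕜] X) (hR : Summable fun i => ‖R i‖)
    (μ : VectorMeasure T X) (hμ : BddVar μ) (ν : VectorMeasure T X)
    (hν : ∀ B : Set T, MeasurableSet B → HasSum (fun i => (R i) (μ (ω i ⁻¹' B))) (ν B)) :
    BddVar ν := by
  classical
  set C : ℝ := (∑' i, ‖R i‖) * varNorm μ with hC
  have hbound : ∀ P : Finset (Set T), IsBorelPartition P → ∑ A ∈ P, ‖ν A‖ ≤ C := by
    intro P hP
    have hmeasA : ∀ A ∈ P, MeasurableSet A := hP.1
    have hterm : ∀ A ∈ P, ∀ i : ℕ, ‖(R i) (μ (ω i ⁻¹' A))‖ ≤ ‖R i‖ * ‖μ (ω i ⁻¹' A)‖ :=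
      fun A _ i => (R i).le_opNorm _
    have hsummA : ∀ A ∈ P, Summable (fun i => ‖(R i) (μ (ω i ⁻¹' A))‖) := by
      intro A hA
      apply Summable.of_nonneg_of_le (fun i => norm_nonneg _) _ (hR.mul_right (varNorm μ))
      intro i
      refine (hterm A hA i).trans ?_
      exact mul_le_mul_of_nonneg_left
        (CCV.norm_meas_le μ hμ ((hωm i) (hmeasA A hA))) (norm_nonneg _)
    have h1 : ∀ A ∈ P, ‖ν A‖ ≤ ∑' i, ‖(R i) (μ (ω i ⁻¹' A))‖ := by
      intro A hA
      rw [← (hν A (hmeasA A hA)).tsum_eq]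
      exact norm_tsum_le_tsum_norm (hsummA A hA)
    calc ∑ A ∈ P, ‖ν A‖ ≤ ∑ A ∈ P, ∑' i, ‖(R i) (μ (ω i ⁻¹' A))‖ :=
          Finset.sum_le_sum h1
      _ = ∑' i, ∑ A ∈ P, ‖(R i) (μ (ω i ⁻¹' A))‖ := (Summable.tsum_finsetSum (fun A hA => hsummA A hA)).symm
      _ ≤ ∑' i, ‖R i‖ * varNorm μ := by
          apply Summable.tsum_le_tsum _ _ (hR.mul_right (varNorm μ))
          · intro i
            calc ∑ A ∈ P, ‖(R i) (μ (ω i ⁻¹' A))‖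
                ≤ ∑ A ∈ P, ‖R i‖ * ‖μ (ω i ⁻¹' A)‖ :=
                  Finset.sum_le_sum (fun A hA => hterm A hA i)
              _ = ‖R i‖ * ∑ A ∈ P, ‖μ (ω i ⁻¹' A)‖ := by rw [Finset.mul_sum]
              _ ≤ ‖R i‖ * varNorm μ := by
                  apply mul_le_mul_of_nonneg_left _ (norm_nonneg _)
                  apply CCV.partition_le μ hμ P (fun A => ω i ⁻¹' A)
                    (fun A hA => (hωm i) (hmeasA A hA))
                  intro A hA B hB hAB
                  exact Disjoint.preimage _ (hP.2.1 hA hB hAB)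
          · apply summable_sum
            intro A hA
            exact hsummA A hA
      _ = C := by rw [hC, tsum_mul_right]
  have hevar : evar ν ≤ ENNReal.ofReal C := by
    apply iSup₂_le
    intro P hP
    have h3 : (∑ A ∈ P, (‖ν A‖₊ : ENNReal)) = ENNReal.ofReal (∑ A ∈ P, ‖ν A‖) := by
      rw [ENNReal.ofReal_sum_of_nonneg (fun A _ => norm_nonneg _)]
      exact Finset.sum_congr rfl (fun A _ => (ofReal_norm _).symm)
    rw [h3]
    exact ENNReal.ofReal_le_ofReal (hbound P hP)
  exact ne_top_of_le_ne_top ENNReal.ofReal_ne_top hevar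

end CCVAux4

/-- countable change of variable: if `ν = H(μ)` pointwise (i.e.
`ν(B) = ∑ R_i(μ(ω_i⁻¹(B)))` for Borel `B`) and `g = ∑ R_i* ∘ f ∘ ω_i`, then
`∫ f dν = ∫ g dμ`. -/
theorem countable_change_of_variable
    {T : Type*} [MetricSpace T] [CompactSpace T] [MeasurableSpace T] [BorelSpace T]
    {𝕜 X : Type*} [RCLike 𝕜] [NormedAddCommGroup X] [InnerProductSpace 𝕜 X] [CompleteSpace X]
    (ω : ℕ → T → T) (r : ℕ → NNReal) (hω : ∀ i, LipschitzWith (r i) (ω i))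
    (hrbdd : ∃ C : NNReal, ∀ i, r i ≤ C)
    (R : ℕ → X →L[𝕜] X) (hR : Summable fun i => ‖R i‖)
    (μ : VectorMeasure T X) (hμ : BddVar μ)
    (ν : VectorMeasure T X)
    (hν : ∀ B : Set T, MeasurableSet B → HasSum (fun i => (R i) (μ (ω i ⁻¹' B))) (ν B))
    (f : T → X) (hf : Continuous f) :
    ∃ I : 𝕜, HasUIntegral 𝕜 ν f I ∧
      HasUIntegral 𝕜 μ (fun t => ∑' i, ContinuousLinearMap.adjoint (R i) (f (ω i t))) I := by
  classical
  have hωm : ∀ i, Measurable (ω i) := fun i => (hω i).continuous.measurable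
  obtain ⟨C₀, hC₀⟩ := (isCompact_range hf).isBounded.exists_norm_le
  set Cf : ℝ := max C₀ 0 with hCfdef
  have hCf0 : (0:ℝ) ≤ Cf := le_max_right _ _
  have hfb : ∀ t, ‖f t‖ ≤ Cf := fun t => le_trans (hC₀ _ ⟨t, rfl⟩) (le_max_left _ _)
  set S : ℝ := ∑' i, ‖R i‖ with hSdef
  have hRnn : ∀ i, (0:ℝ) ≤ ‖R i‖ := fun i => norm_nonneg _
  have hS0 : (0:ℝ) ≤ S := tsum_nonneg hRnn
  -- adjoint norm bound
  have adjb : ∀ (i : ℕ) (z : X), ‖(ContinuousLinearMap.adjoint (R i)) z‖ ≤ ‖R i‖ * ‖z‖ := by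
    intro i z
    calc ‖(ContinuousLinearMap.adjoint (R i)) z‖
        ≤ ‖ContinuousLinearMap.adjoint (R i)‖ * ‖z‖ :=
          (ContinuousLinearMap.adjoint (R i)).le_opNorm z
      _ = ‖R i‖ * ‖z‖ := by rw [LinearIsometryEquiv.norm_map]
  -- approximating sequence for f
  have happrox : ∀ n : ℕ, ∃ g : T → X, IsSimpleFn g ∧ ∀ t, ‖g t - f t‖ ≤ 1/((n:ℝ)+1) :=
    fun n => CCV.exists_simple_approx hf (by positivity)
  choose h hhsimp hhclose using happrox
  have hone : ∀ n : ℕ, 1/((n:ℝ)+1) ≤ 1 := by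
    intro n
    rw [div_le_one (by positivity)]
    have : (0:ℝ) ≤ (n:ℝ) := Nat.cast_nonneg n
    linarith
  have hhb : ∀ n t, ‖h n t‖ ≤ Cf + 1 := by
    intro n t
    calc ‖h n t‖ = ‖(h n t - f t) + f t‖ := by rw [sub_add_cancel]
      _ ≤ ‖h n t - f t‖ + ‖f t‖ := norm_add_le _ _
      _ ≤ 1/((n:ℝ)+1) + Cf := add_le_add (hhclose n t) (hfb t)
      _ ≤ Cf + 1 := by have := hone n; linarith
  have hbddν : BddVar ν := CCV.bddVar_target ω hωm R hR μ hμ ν hν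
  have hVν0 : (0:ℝ) ≤ varNorm ν := CCV.varNorm_nonneg ν
  have hV0 : (0:ℝ) ≤ varNorm μ := CCV.varNorm_nonneg μ
  have hdiv0 : Tendsto (fun n : ℕ => 1/((n:ℝ)+1)) atTop (nhds 0) :=
    tendsto_one_div_add_atTop_nhds_zero_nat
  -- Cauchy sequence of integrals against ν
  have hcauchy : CauchySeq (fun n => simpleIntegral 𝕜 ν (h n)) := by
    apply cauchySeq_of_le_tendsto_0 (fun N : ℕ => 2/((N:ℝ)+1) * varNorm ν)
    · intro n m N hn hm
      rw [dist_eq_norm]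
      have hb2 : ∀ t, ‖h n t - h m t‖ ≤ 1/((n:ℝ)+1) + 1/((m:ℝ)+1) := by
        intro t
        calc ‖h n t - h m t‖ = ‖(h n t - f t) + (f t - h m t)‖ := by rw [sub_add_sub_cancel]
          _ ≤ ‖h n t - f t‖ + ‖f t - h m t‖ := norm_add_le _ _
          _ ≤ 1/((n:ℝ)+1) + 1/((m:ℝ)+1) := by
              refine add_le_add (hhclose n t) ?_
              rw [norm_sub_rev]; exact hhclose m t
      have hest := CCV.si_sub_le (𝕜 := 𝕜) ν hbddν (hhsimp n) (hhsimp m) (by positivity) hb2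
      refine hest.trans ?_
      apply mul_le_mul_of_nonneg_right _ hVν0
      have e1 : 1/((n:ℝ)+1) ≤ 1/((N:ℝ)+1) := by
        apply one_div_le_one_div_of_le (by positivity)
        have : (N:ℝ) ≤ (n:ℝ) := Nat.cast_le.2 hn
        linarith
      have e2 : 1/((m:ℝ)+1) ≤ 1/((N:ℝ)+1) := by
        apply one_div_le_one_div_of_le (by positivity)
        have : (N:ℝ) ≤ (m:ℝ) := Nat.cast_le.2 hm
        linarith
      calc 1/((n:ℝ)+1) + 1/((m:ℝ)+1) ≤ 1/((N:ℝ)+1) + 1/((N:ℝ)+1) := add_le_add e1 e2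
        _ = 2/((N:ℝ)+1) := by ring
    · have h1 := hdiv0.mul_const (2 * varNorm ν)
      simp only [zero_mul] at h1
      refine h1.congr (fun n => ?_)
      ring
  obtain ⟨I, hI⟩ := cauchySeq_tendsto_of_complete hcauchy
  refine ⟨I, ?_, ?_⟩
  · exact CCV.hasUIntegral_of_approx ν hbddν f h (fun n => 1/((n:ℝ)+1)) hhsimp hhclose hdiv0 hI
  · -- the μ side
    have hsummf : ∀ t, Summable (fun i => (ContinuousLinearMap.adjoint (R i)) (f (ω i t))) := by
      intro t
      apply Summable.of_norm_bounded (hR.mul_right Cf)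
      intro i
      exact (adjb i _).trans (mul_le_mul_of_nonneg_left (hfb _) (hRnn i))
    set k : ℕ → T → X :=
      fun n t => ∑ i ∈ Finset.range n, (ContinuousLinearMap.adjoint (R i)) (h n (ω i t))
      with hkdef
    have hksimple : ∀ n i, IsSimpleFn
        (fun t => (ContinuousLinearMap.adjoint (R i)) (h n (ω i t))) := by
      intro n i
      exact CCV.isSimpleFn_map (CCV.isSimpleFn_comp_pre (hhsimp n) (hωm i)) _
    have hksimp : ∀ n, IsSimpleFn (k n) := by
      intro n
      exact CCV.isSimpleFn_sum (Finset.range n) _ (fun i _ => hksimple n i)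
    set tail : ℕ → ℝ := fun n => ∑' i, ‖R (i + n)‖ with htaildef
    have htailsumm : ∀ n, Summable (fun i => ‖R (i + n)‖) :=
      fun n => (summable_nat_add_iff (f := fun i => ‖R i‖) n).2 hR
    have htail0 : Tendsto tail atTop (nhds 0) := by
      rw [htaildef]; exact tendsto_sum_nat_add (fun i => ‖R i‖)
    have htailnn : ∀ n, (0:ℝ) ≤ tail n := fun n => tsum_nonneg (fun i => norm_nonneg _)
    set b : ℕ → ℝ := fun n => S * (1/((n:ℝ)+1)) + tail n * Cf with hbdef
    have hb0 : Tendsto b atTop (nhds 0) := by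
      have h1 := hdiv0.const_mul S
      have h2 := htail0.mul_const Cf
      simp only [mul_zero, zero_mul] at h1 h2
      have h3 := h1.add h2
      rw [hbdef]
      simpa [one_div, htaildef] using h3
    have hkb : ∀ n t, ‖k n t - (∑' i, ContinuousLinearMap.adjoint (R i) (f (ω i t)))‖ ≤ b n := by
      intro n t
      have hsplit : (∑' i, ContinuousLinearMap.adjoint (R i) (f (ω i t)))
          = (∑ i ∈ Finset.range n, (ContinuousLinearMap.adjoint (R i)) (f (ω i t)))
            + ∑' i, (ContinuousLinearMap.adjoint (R (i + n))) (f (ω (i + n) t)) :=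
        (Summable.sum_add_tsum_nat_add n (hsummf t)).symm
      have hsumtail : Summable
          (fun i => (ContinuousLinearMap.adjoint (R (i + n))) (f (ω (i + n) t))) :=
        (summable_nat_add_iff (f := fun i => (ContinuousLinearMap.adjoint (R i)) (f (ω i t))) n).2 (hsummf t)
      have hdiffeq : k n t - (∑' i, ContinuousLinearMap.adjoint (R i) (f (ω i t)))
          = (∑ i ∈ Finset.range n, ((ContinuousLinearMap.adjoint (R i)) (h n (ω i t))
              - (ContinuousLinearMap.adjoint (R i)) (f (ω i t))))
            - ∑' i, (ContinuousLinearMap.adjoint (R (i + n))) (f (ω (i + n) t)) := by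
        rw [hsplit, Finset.sum_sub_distrib]
        simp only [hkdef]
        abel
      rw [hdiffeq]
      have hb1 : ‖∑ i ∈ Finset.range n, ((ContinuousLinearMap.adjoint (R i)) (h n (ω i t))
          - (ContinuousLinearMap.adjoint (R i)) (f (ω i t)))‖ ≤ S * (1/((n:ℝ)+1)) := by
        calc ‖∑ i ∈ Finset.range n, ((ContinuousLinearMap.adjoint (R i)) (h n (ω i t))
              - (ContinuousLinearMap.adjoint (R i)) (f (ω i t)))‖
            ≤ ∑ i ∈ Finset.range n, ‖(ContinuousLinearMap.adjoint (R i)) (h n (ω i t))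
              - (ContinuousLinearMap.adjoint (R i)) (f (ω i t))‖ := norm_sum_le _ _
          _ ≤ ∑ i ∈ Finset.range n, ‖R i‖ * (1/((n:ℝ)+1)) := by
              apply Finset.sum_le_sum
              intro i _
              rw [← map_sub]
              exact (adjb i _).trans
                (mul_le_mul_of_nonneg_left (hhclose n _) (hRnn i))
          _ = (∑ i ∈ Finset.range n, ‖R i‖) * (1/((n:ℝ)+1)) := by rw [Finset.sum_mul]
          _ ≤ S * (1/((n:ℝ)+1)) := by
              apply mul_le_mul_of_nonneg_right _ (by positivity)
              exact Summable.sum_le_tsum (Finset.range n) (fun i _ => hRnn i) hR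
      have hb2 : ‖∑' i, (ContinuousLinearMap.adjoint (R (i + n))) (f (ω (i + n) t))‖
          ≤ tail n * Cf := by
        have hnorm : ∀ i, ‖(ContinuousLinearMap.adjoint (R (i + n))) (f (ω (i + n) t))‖
            ≤ ‖R (i + n)‖ * Cf :=
          fun i => (adjb _ _).trans (mul_le_mul_of_nonneg_left (hfb _) (hRnn _))
        have hsn : Summable (fun i =>
            ‖(ContinuousLinearMap.adjoint (R (i + n))) (f (ω (i + n) t))‖) :=
          Summable.of_nonneg_of_le (fun i => norm_nonneg _) hnorm
            ((htailsumm n).mul_right Cf)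
        calc ‖∑' i, (ContinuousLinearMap.adjoint (R (i + n))) (f (ω (i + n) t))‖
            ≤ ∑' i, ‖(ContinuousLinearMap.adjoint (R (i + n))) (f (ω (i + n) t))‖ :=
              norm_tsum_le_tsum_norm hsn
          _ ≤ ∑' i, ‖R (i + n)‖ * Cf := Summable.tsum_le_tsum hnorm hsn ((htailsumm n).mul_right Cf)
          _ = tail n * Cf := by rw [htaildef, tsum_mul_right]
      calc ‖_ - _‖ ≤ ‖_‖ + ‖_‖ := norm_sub_le _ _
        _ ≤ S * (1/((n:ℝ)+1)) + tail n * Cf := add_le_add hb1 hb2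
        _ = b n := rfl
    -- convergence of ∫ k n dμ to I
    have hcore : ∀ n, HasSum
        (fun i => simpleIntegral 𝕜 μ
          (fun t => (ContinuousLinearMap.adjoint (R i)) (h n (ω i t))))
        (simpleIntegral 𝕜 ν (h n)) :=
      fun n => CCV.core_hasSum ω hωm R μ ν hν (hhsimp n)
    have hSIk : ∀ n, simpleIntegral 𝕜 μ (k n)
        = ∑ i ∈ Finset.range n, simpleIntegral 𝕜 μ
            (fun t => (ContinuousLinearMap.adjoint (R i)) (h n (ω i t))) := by
      intro n
      exact CCV.si_sum μ (Finset.range n) _ (fun i _ => hksimple n i)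
    have hdiff : ∀ n, ‖simpleIntegral 𝕜 ν (h n) - simpleIntegral 𝕜 μ (k n)‖
        ≤ tail n * ((Cf + 1) * varNorm μ) := by
      intro n
      have e := Summable.sum_add_tsum_nat_add
        (f := fun i => simpleIntegral 𝕜 μ
          (fun t => (ContinuousLinearMap.adjoint (R i)) (h n (ω i t)))) n (hcore n).summable
      have e2 : simpleIntegral 𝕜 ν (h n) - simpleIntegral 𝕜 μ (k n)
          = ∑' i, simpleIntegral 𝕜 μ
              (fun t => (ContinuousLinearMap.adjoint (R (i + n))) (h n (ω (i + n) t))) := by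
        rw [hSIk n, ← (hcore n).tsum_eq, ← e]
        ring
      rw [e2]
      have hterm : ∀ j, ‖simpleIntegral 𝕜 μ
          (fun t => (ContinuousLinearMap.adjoint (R j)) (h n (ω j t)))‖
          ≤ ‖R j‖ * ((Cf + 1) * varNorm μ) := by
        intro j
        have hCb : ∀ t, ‖(ContinuousLinearMap.adjoint (R j)) (h n (ω j t))‖
            ≤ ‖R j‖ * (Cf + 1) :=
          fun t => (adjb j _).trans (mul_le_mul_of_nonneg_left (hhb n _) (hRnn j))
        have := CCV.si_norm_le (𝕜 := 𝕜) μ hμ (hksimple n j) (by positivity) hCb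
        calc ‖simpleIntegral 𝕜 μ (fun t => (ContinuousLinearMap.adjoint (R j)) (h n (ω j t)))‖
            ≤ ‖R j‖ * (Cf + 1) * varNorm μ := this
          _ = ‖R j‖ * ((Cf + 1) * varNorm μ) := by ring
      have hsn : Summable (fun i => ‖simpleIntegral 𝕜 μ
          (fun t => (ContinuousLinearMap.adjoint (R (i + n))) (h n (ω (i + n) t)))‖) :=
        Summable.of_nonneg_of_le (fun i => norm_nonneg _) (fun i => hterm (i + n))
          ((htailsumm n).mul_right _)
      calc ‖∑' i, simpleIntegral 𝕜 μ
            (fun t => (ContinuousLinearMap.adjoint (R (i + n))) (h n (ω (i + n) t)))‖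
          ≤ ∑' i, ‖simpleIntegral 𝕜 μ
            (fun t => (ContinuousLinearMap.adjoint (R (i + n))) (h n (ω (i + n) t)))‖ :=
            norm_tsum_le_tsum_norm hsn
        _ ≤ ∑' i, ‖R (i + n)‖ * ((Cf + 1) * varNorm μ) :=
            Summable.tsum_le_tsum (fun i => hterm (i + n)) hsn ((htailsumm n).mul_right _)
        _ = tail n * ((Cf + 1) * varNorm μ) := by rw [htaildef, tsum_mul_right]
    have hIk : Tendsto (fun n => simpleIntegral 𝕜 μ (k n)) atTop (nhds I) := by
      have hzero : Tendsto
          (fun n => simpleIntegral 𝕜 ν (h n) - simpleIntegral 𝕜 μ (k n)) atTop (nhds 0) := by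
        apply squeeze_zero_norm hdiff
        have := htail0.mul_const ((Cf + 1) * varNorm μ)
        simpa using this
      have h2 := hI.sub hzero
      rw [sub_zero] at h2
      exact h2.congr (fun n => by ring)
    exact CCV.hasUIntegral_of_approx μ hμ _ k b hksimp hkb hb0 hIk
end
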